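/- Let M be binary and Y take values in {0,1,2}, with joint law factoring as P(M)P(Y|M)P(R^M|M)P(R^Y|Y). There exist two distinct parameter vectors inducing the same twelve observable probabilities (P_{1211}, P_{1111}, P_{1011}, P_{0211}, P_{0111}, P_{0011}, P_{1+10}, P_{0+10}, P_{+201}, P_{+101}, P_{+001}, P_{++00}) = (180,60,15,120,30,15,285,195,180,50,20,290)/1440, both having P(M=1)=1/2, P(R^M=1|M=1)=3/4, P(R^M=1|M=0)=1/2, but differing in the conditional outcome distributions: the first has P(Y=2|M=1)=1/2 and the second P(Y=2|M=1)=5/8, hence different joint laws of (M,Y). -/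

import Mathlib

open Finset

/-- Counterexample (vi): binary mediator `M`, ternary outcome `Y ∈ {0,1,2}`,
joint law factoring as `P(M) P(Y|M) P(R^M|M) P(R^Y|Y)`.  Two distinct
parameter vectors induce the same twelve observable probabilities
`(180, 60, 15, 120, 30, 15, 285, 195, 180, 50, 20, 290)/1440`, both with
`P(M=1)=1/2`, `P(R^M=1|M=1)=3/4`, `P(R^M=1|M=0)=1/2`, but differing in the
conditional outcome distribution (`P(Y=2|M=1) = 1/2` versus `5/8`), hence in
the joint law of `(M, Y)`. -/
theorem unidentifiable_ternary_outcome :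
    ∃ (pM qM : Bool → ℝ) (pY qY : Bool → Fin 3 → ℝ) (pRM qRM : Bool → Bool → ℝ)
      (pRY qRY : Fin 3 → Bool → ℝ),
      -- pmf / conditional-pmf conditions
      (∀ m, 0 ≤ pM m) ∧ (∑ m, pM m) = 1 ∧ (∀ m, 0 ≤ qM m) ∧ (∑ m, qM m) = 1 ∧
      (∀ m y, 0 ≤ pY m y) ∧ (∀ m, (∑ y, pY m y) = 1) ∧
      (∀ m y, 0 ≤ qY m y) ∧ (∀ m, (∑ y, qY m y) = 1) ∧
      (∀ m r, 0 ≤ pRM m r) ∧ (∀ m, (∑ r, pRM m r) = 1) ∧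
      (∀ m r, 0 ≤ qRM m r) ∧ (∀ m, (∑ r, qRM m r) = 1) ∧
      (∀ y s, 0 ≤ pRY y s) ∧ (∀ y, (∑ s, pRY y s) = 1) ∧
      (∀ y s, 0 ≤ qRY y s) ∧ (∀ y, (∑ s, qRY y s) = 1) ∧
      -- observables of the first witness
      (pM true * pY true 2 * pRM true true * pRY 2 true = 180/1440 ∧
        pM true * pY true 1 * pRM true true * pRY 1 true = 60/1440 ∧
        pM true * pY true 0 * pRM true true * pRY 0 true = 15/1440 ∧
        pM false * pY false 2 * pRM false true * pRY 2 true = 120/1440 ∧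
        pM false * pY false 1 * pRM false true * pRY 1 true = 30/1440 ∧
        pM false * pY false 0 * pRM false true * pRY 0 true = 15/1440 ∧
        (∑ y, pM true * pY true y * pRM true true * pRY y false) = 285/1440 ∧
        (∑ y, pM false * pY false y * pRM false true * pRY y false) = 195/1440 ∧
        (∑ m, pM m * pY m 2 * pRM m false * pRY 2 true) = 180/1440 ∧
        (∑ m, pM m * pY m 1 * pRM m false * pRY 1 true) = 50/1440 ∧
        (∑ m, pM m * pY m 0 * pRM m false * pRY 0 true) = 20/1440 ∧
        (∑ m, ∑ y, pM m * pY m y * pRM m false * pRY y false) = 290/1440) ∧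
      -- the same observables for the second witness
      (qM true * qY true 2 * qRM true true * qRY 2 true = 180/1440 ∧
        qM true * qY true 1 * qRM true true * qRY 1 true = 60/1440 ∧
        qM true * qY true 0 * qRM true true * qRY 0 true = 15/1440 ∧
        qM false * qY false 2 * qRM false true * qRY 2 true = 120/1440 ∧
        qM false * qY false 1 * qRM false true * qRY 1 true = 30/1440 ∧
        qM false * qY false 0 * qRM false true * qRY 0 true = 15/1440 ∧
        (∑ y, qM true * qY true y * qRM true true * qRY y false) = 285/1440 ∧
        (∑ y, qM false * qY false y * qRM false true * qRY y false) = 195/1440 ∧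
        (∑ m, qM m * qY m 2 * qRM m false * qRY 2 true) = 180/1440 ∧
        (∑ m, qM m * qY m 1 * qRM m false * qRY 1 true) = 50/1440 ∧
        (∑ m, qM m * qY m 0 * qRM m false * qRY 0 true) = 20/1440 ∧
        (∑ m, ∑ y, qM m * qY m y * qRM m false * qRY y false) = 290/1440) ∧
      -- both have the same identified parameters
      pM true = 1/2 ∧ qM true = 1/2 ∧
      pRM true true = 3/4 ∧ pRM false true = 1/2 ∧
      qRM true true = 3/4 ∧ qRM false true = 1/2 ∧
      -- but differ in the conditional outcome distribution
      pY true 2 = 1/2 ∧ qY true 2 = 5/8 ∧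
      -- hence in the joint law of (M, Y)
      pM true * pY true 2 ≠ qM true * qY true 2 := by
  refine ⟨(fun _ => 1/2), (fun _ => 1/2),
    (fun m => if m then ![1/6, 1/3, 1/2] else ![1/4, 1/4, 1/2]),
    (fun m => if m then ![1/8, 1/4, 5/8] else ![3/16, 3/16, 5/8]),
    (fun m r => if m then (if r then 3/4 else 1/4) else 1/2),
    (fun m r => if m then (if r then 3/4 else 1/4) else 1/2),
    ![fun s => if s then (1:ℝ)/6 else 5/6, fun s => if s then 1/3 else 2/3,
      fun s => if s then 2/3 else 1/3],
    ![fun s => if s then (2:ℝ)/9 else 7/9, fun s => if s then 4/9 else 5/9,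
      fun s => if s then 8/15 else 7/15], ?_⟩
  refine ⟨?_, ?_, ?_, ?_, ?_, ?_, ?_, ?_, ?_, ?_, ?_, ?_, ?_, ?_, ?_, ?_,
    ?_, ?_, ?_, ?_, ?_, ?_, ?_, ?_, ?_, ?_, ?_⟩ <;>
  first
  | (intro m; fin_cases m <;> intro y <;> fin_cases y <;> norm_num)
  | (intro m; fin_cases m <;> intro r <;> fin_cases r <;> norm_num)
  | (intro y; fin_cases y <;> intro s <;> fin_cases s <;> norm_num)
  | (intro m; fin_cases m <;> simp [Fin.sum_univ_three] <;> norm_num)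
  | (intro y; fin_cases y <;> simp <;> norm_num)
  | (refine ⟨?_, ?_, ?_, ?_, ?_, ?_, ?_, ?_, ?_, ?_, ?_, ?_⟩ <;>
      simp [Fin.sum_univ_three] <;> norm_num)
  | norm_num [Matrix.cons_val_two]
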